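/- Let K be a field of characteristic zero and I a finite nonempty set with |I| = n+1. The K-linear functional ∫_I on the polynomial ring K[t_i : i ∈ I], defined on monomials by ∫_I ∏_i t_i^{ν_i} = (∏_i ν_i!)/(n + ∑_i ν_i)!, vanishes on the ideal generated by 1 − ∑_{i∈I} t_i. Equivalently, ∫_I (1 − ∑_{i∈I} t_i)·f = 0 for every polynomial f, so ∫_I factors through the quotient ring P_I = K[t_i : i∈I]/(1 − ∑_i t_i). -/

import Mathlib

/-- The linear functional `∫_I` on `K[t_i : i ∈ I]` determined on monomials by
`∫_I ∏ t_i^{ν_i} = (∏ ν_i!) / (n + ∑ ν_i)!`. -/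
noncomputable def simplexIntegral (K : Type*) [Field K] [CharZero K] {I : Type*}
    [Fintype I] (n : ℕ) (f : MvPolynomial I K) : K :=
  ∑ ν ∈ f.support, f.coeff ν *
    (((∏ i, Nat.factorial (ν i) : ℕ) : K) /
      ((Nat.factorial (n + ∑ i, ν i) : ℕ) : K))

section aux
variable (K : Type*) [Field K] [CharZero K] {I : Type*} [Fintype I]

/-- The weight of a monomial. -/
noncomputable def simplexWeight (n : ℕ) (ν : I →₀ ℕ) : K :=
  (((∏ i, Nat.factorial (ν i) : ℕ) : K) /
      ((Nat.factorial (n + ∑ i, ν i) : ℕ) : K))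

lemma simplexIntegral_eq_lc (n : ℕ) (f : MvPolynomial I K) :
    simplexIntegral K n f = (Finsupp.linearCombination K (simplexWeight K n) ∘ₗ
      (AddMonoidAlgebra.coeffLinearEquiv K).toLinearMap) f := by
  rw [LinearMap.comp_apply, Finsupp.linearCombination_apply, Finsupp.sum]
  rfl

lemma simplexIntegral_monomial (n : ℕ) (ν : I →₀ ℕ) (c : K) :
    simplexIntegral K n (MvPolynomial.monomial ν c) = c * simplexWeight K n ν := by
  rw [simplexIntegral_eq_lc]
  have : (AddMonoidAlgebra.coeffLinearEquiv K).toLinearMap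
      (MvPolynomial.monomial ν c : MvPolynomial I K) = Finsupp.single ν c := rfl
  rw [LinearMap.comp_apply, this, Finsupp.linearCombination_single, smul_eq_mul]

end aux

/-- `∫_I` vanishes on the ideal generated by `1 - ∑ t_i`:
`∫_I (1 - ∑ t_i) · f = 0` for every polynomial `f`. -/
theorem simplexIntegral_well_defined (K : Type*) [Field K] [CharZero K]
    (I : Type*) [Fintype I] [Nonempty I] (n : ℕ) (hcard : Fintype.card I = n + 1)
    (f : MvPolynomial I K) :
    simplexIntegral K n ((1 - ∑ i, MvPolynomial.X i) * f) = 0 := by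
  -- reduce to monomials
  have key : ∀ (ν : I →₀ ℕ) (c : K),
      simplexIntegral K n ((1 - ∑ i, MvPolynomial.X i) * MvPolynomial.monomial ν c) = 0 := by
    intro ν c
    classical
    have expand : (1 - ∑ i, MvPolynomial.X i) * MvPolynomial.monomial ν c
        = MvPolynomial.monomial ν c
          - ∑ i, MvPolynomial.monomial (ν + Finsupp.single i 1) c := by
      rw [sub_mul, one_mul, Finset.sum_mul]
      congr 1
      apply Finset.sum_congr rfl
      intro i _
      rw [MvPolynomial.X, MvPolynomial.monomial_mul, one_mul, add_comm]
    rw [expand, simplexIntegral_eq_lc, map_sub, map_sum,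
      ← simplexIntegral_eq_lc]
    simp_rw [← simplexIntegral_eq_lc, simplexIntegral_monomial]
    set S := ∑ i, ν i with hS
    set P := ∏ i, Nat.factorial (ν i) with hP
    have hsum : ∀ i : I, ∑ j, ((ν + Finsupp.single i 1 : I →₀ ℕ)) j = S + 1 := by
      intro i
      simp [Finsupp.add_apply, Finset.sum_add_distrib, Finsupp.single_apply, hS]
    have hprod : ∀ i : I, ∏ j, Nat.factorial (((ν + Finsupp.single i 1 : I →₀ ℕ)) j)
        = (ν i + 1) * P := by
      intro i
      rw [hP, ← Finset.mul_prod_erase Finset.univ _ (Finset.mem_univ i),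
        ← Finset.mul_prod_erase Finset.univ (fun j => Nat.factorial (ν j)) (Finset.mem_univ i)]
      rw [← mul_assoc]
      congr 1
      · simp [Finsupp.add_apply, Nat.factorial_succ, mul_comm]
      · apply Finset.prod_congr rfl
        intro j hj
        simp [Finsupp.add_apply, Finsupp.single_apply,
          (Finset.ne_of_mem_erase hj : j ≠ i).symm]
    have hw : ∀ i : I, simplexWeight K n (ν + Finsupp.single i 1)
        = ((ν i + 1 : ℕ) : K) * ((P : ℕ) : K) / ((Nat.factorial (n + S + 1) : ℕ) : K) := by
      intro i
      rw [simplexWeight, hsum i, hprod i]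
      push_cast
      ring_nf
    rw [simplexWeight]
    simp_rw [hw]
    rw [← hS, ← hP, ← Finset.mul_sum, ← mul_sub]
    apply mul_eq_zero_of_right
    rw [← Finset.sum_div, ← Finset.sum_mul]
    have hcast : (∑ i : I, ((ν i + 1 : ℕ) : K)) = ((n + S + 1 : ℕ) : K) := by
      push_cast
      rw [Finset.sum_add_distrib]
      simp only [Finset.sum_const, nsmul_eq_mul, mul_one, ← hS]
      rw [Finset.card_univ, hcard, hS, Nat.cast_sum]
      push_cast; ring
    rw [hcast]
    have hfact : ((Nat.factorial (n + S + 1) : ℕ) : K)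
        = ((n + S + 1 : ℕ) : K) * ((Nat.factorial (n + S) : ℕ) : K) := by
      rw [← Nat.cast_mul, ← Nat.factorial_succ]
    have h1 : ((Nat.factorial (n + S) : ℕ) : K) ≠ 0 := Nat.cast_ne_zero.mpr (Nat.factorial_ne_zero _)
    have h2 : ((n + S + 1 : ℕ) : K) ≠ 0 := Nat.cast_ne_zero.mpr (by omega)
    rw [hfact]
    push_cast at h1 h2 ⊢
    field_simp
    ring
  rw [simplexIntegral_eq_lc]
  conv_lhs => rw [f.as_sum, Finset.mul_sum]
  rw [map_sum]
  apply Finset.sum_eq_zero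
  intro ν hν
  rw [← simplexIntegral_eq_lc]
  exact key ν _
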